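/- Under misère play, for every game G other than the zero game, G + (conjugate of G) is not equivalent to 0 modulo the universe of all games; that is, there exists a game X with o⁻(G + Ḡ + X) ≠ o⁻(X). -/

import Mathlib

namespace SetTheory

universe u

/-- Pre-games, as formerly in Mathlib's `SetTheory.PGame` (removed from Mathlib since). -/
inductive PGame : Type (u + 1)
  | mk : ∀ α β : Type u, (α → PGame) → (β → PGame) → PGame

namespace PGame

/-- The indexing type for allowable moves by Left. -/
def LeftMoves : PGame → Type u
  | mk l _ _ _ => l

/-- The indexing type for allowable moves by Right. -/
def RightMoves : PGame → Type u
  | mk _ r _ _ => r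

/-- The new game after Left makes an allowed move. -/
def moveLeft : ∀ g : PGame, LeftMoves g → PGame
  | mk _l _ L _ => L

/-- The new game after Right makes an allowed move. -/
def moveRight : ∀ g : PGame, RightMoves g → PGame
  | mk _ _r _ R => R

/-- `IsOption x y` means that `x` is either a left or right option for `y`. -/
inductive IsOption : PGame → PGame → Prop
  | moveLeft {x : PGame} (i : x.LeftMoves) : IsOption (x.moveLeft i) x
  | moveRight {x : PGame} (i : x.RightMoves) : IsOption (x.moveRight i) x

/-- `Subsequent x y` says that `x` can be obtained by playing some nonempty sequence of moves
from `y`. -/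
def Subsequent : PGame → PGame → Prop :=
  Relation.TransGen IsOption

/-- The negation of a pre-game. -/
def neg : PGame → PGame
  | ⟨l, r, L, R⟩ => ⟨r, l, fun i => neg (R i), fun i => neg (L i)⟩

instance : Neg PGame :=
  ⟨neg⟩

/-- The sum of two pre-games. -/
noncomputable instance : Add PGame.{u} :=
  ⟨fun x y => by
    induction x generalizing y with | mk xl xr _ _ IHxl IHxr => _
    induction y with | mk yl yr yL yR IHyl IHyr => _
    have y := mk yl yr yL yR
    refine ⟨xl ⊕ yl, xr ⊕ yr, Sum.rec ?_ ?_, Sum.rec ?_ ?_⟩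
    · exact fun i => IHxl i y
    · exact IHyl
    · exact fun i => IHxr i y
    · exact IHyr⟩

end PGame

end SetTheory

open SetTheory

namespace Misere

/-- Misère winning: `(wins G).1` means Left, moving first on `G`, wins under misère play;
`(wins G).2` means Right, moving first, wins. The player unable to move wins. -/
def wins : PGame → Prop × Prop
  | ⟨α, β, L, R⟩ =>
    (IsEmpty α ∨ ∃ i, ¬ (wins (L i)).2,
     IsEmpty β ∨ ∃ j, ¬ (wins (R j)).1)

/-- Left wins moving first under misère play. -/
def LeftFirst (G : PGame) : Prop := (wins G).1

/-- Right wins moving first under misère play. -/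
def RightFirst (G : PGame) : Prop := (wins G).2

/-- Normal-play winning: `(nwins G).1` means Left moving first wins (player unable to move loses). -/
def nwins : PGame → Prop × Prop
  | ⟨α, β, L, R⟩ =>
    (∃ i, ¬ (nwins (L i)).2,
     ∃ j, ¬ (nwins (R j)).1)

/-- Outcome classes. -/
inductive Outcome : Type
  | L | R | N | P
  deriving DecidableEq

/-- The partial order on outcomes: L > P > R, L > N > R, with P and N incomparable. -/
instance : LE Outcome := ⟨fun a b => a = b ∨ a = .R ∨ b = .L⟩

open Classical in
/-- The misère outcome of a game. -/
noncomputable def misereOutcome (G : PGame) : Outcome :=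
  if (wins G).1 then (if (wins G).2 then .N else .L)
  else (if (wins G).2 then .R else .P)

open Classical in
/-- The normal-play outcome of a game. -/
noncomputable def normalOutcome (G : PGame) : Outcome :=
  if (nwins G).1 then (if (nwins G).2 then .N else .L)
  else (if (nwins G).2 then .R else .P)

/-- A game is dicot if every subposition has a Left option iff it has a Right option. -/
def Dicot : PGame → Prop
  | ⟨α, β, L, R⟩ => (IsEmpty α ↔ IsEmpty β) ∧ (∀ i, Dicot (L i)) ∧ (∀ j, Dicot (R j))

/-- A dead Left end: a Left end all of whose followers are Left ends. -/
def DeadLeftEnd : PGame → Prop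
  | ⟨α, _β, _L, R⟩ => IsEmpty α ∧ ∀ j, DeadLeftEnd (R j)

/-- A dead Right end: a Right end all of whose followers are Right ends. -/
def DeadRightEnd : PGame → Prop
  | ⟨_α, β, L, _R⟩ => IsEmpty β ∧ ∀ i, DeadRightEnd (L i)

/-- A follower of `G` is any position reachable from `G`, including `G` itself. -/
def Follower (H G : PGame) : Prop := H = G ∨ PGame.Subsequent H G

/-- An end: a position where some player has no move. -/
def IsEnd (G : PGame) : Prop := IsEmpty G.LeftMoves ∨ IsEmpty G.RightMoves

/-- A game is dead-ending if every one of its end followers is a dead end. -/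
def DeadEnding (G : PGame) : Prop :=
  ∀ H, Follower H G → IsEnd H → (DeadLeftEnd H ∨ DeadRightEnd H)

end Misere

namespace SetTheory

namespace PGame

universe u

instance : Zero PGame.{u} := ⟨⟨PEmpty, PEmpty, PEmpty.elim, PEmpty.elim⟩⟩

@[elab_as_elim]
noncomputable def moveRecOn {C : PGame.{u} → Sort*} (x : PGame.{u})
    (IH : ∀ y : PGame.{u}, (∀ i, C (y.moveLeft i)) → (∀ j, C (y.moveRight j)) → C y) : C x :=
  x.recOn fun yl yr yL yR => IH (mk yl yr yL yR)

noncomputable def birthday : PGame.{u} → Ordinal.{u}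
  | ⟨_, _, xL, xR⟩ =>
    max (Ordinal.lsub.{u, u} fun i => birthday (xL i)) (Ordinal.lsub.{u, u} fun i => birthday (xR i))

theorem birthday_moveLeft_lt {x : PGame.{u}} (i : x.LeftMoves) :
    (x.moveLeft i).birthday < x.birthday := by
  cases x with
  | mk _ _ xL xR =>
    rw [birthday]
    exact lt_max_of_lt_left (Ordinal.lt_lsub.{u, u} (fun i => birthday (xL i)) i)

theorem birthday_moveRight_lt {x : PGame.{u}} (i : x.RightMoves) :
    (x.moveRight i).birthday < x.birthday := by
  cases x with
  | mk _ _ xL xR =>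
    rw [birthday]
    exact lt_max_of_lt_right (Ordinal.lt_lsub.{u, u} (fun i => birthday (xR i)) i)

theorem leftMoves_add : ∀ x y : PGame.{u}, (x + y).LeftMoves = (x.LeftMoves ⊕ y.LeftMoves)
  | ⟨_, _, _, _⟩, ⟨_, _, _, _⟩ => rfl

theorem rightMoves_add : ∀ x y : PGame.{u}, (x + y).RightMoves = (x.RightMoves ⊕ y.RightMoves)
  | ⟨_, _, _, _⟩, ⟨_, _, _, _⟩ => rfl

theorem rightMoves_neg : ∀ x : PGame.{u}, (-x).RightMoves = x.LeftMoves
  | ⟨_, _, _, _⟩ => rfl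

def toLeftMovesAdd {x y : PGame.{u}} : x.LeftMoves ⊕ y.LeftMoves ≃ (x + y).LeftMoves :=
  Equiv.cast (leftMoves_add x y).symm

def toRightMovesAdd {x y : PGame.{u}} : x.RightMoves ⊕ y.RightMoves ≃ (x + y).RightMoves :=
  Equiv.cast (rightMoves_add x y).symm

def toRightMovesNeg {x : PGame.{u}} : x.LeftMoves ≃ (-x).RightMoves :=
  Equiv.cast (rightMoves_neg x).symm

theorem add_moveLeft_inl (x : PGame.{u}) {y : PGame.{u}} (i : x.LeftMoves) :
    (x + y).moveLeft (toLeftMovesAdd (Sum.inl i)) = x.moveLeft i + y := by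
  cases x; cases y; rfl

theorem add_moveLeft_inr (x : PGame.{u}) {y : PGame.{u}} (i : y.LeftMoves) :
    (x + y).moveLeft (toLeftMovesAdd (Sum.inr i)) = x + y.moveLeft i := by
  cases x; cases y; rfl

theorem add_moveRight_inl (x : PGame.{u}) {y : PGame.{u}} (i : x.RightMoves) :
    (x + y).moveRight (toRightMovesAdd (Sum.inl i)) = x.moveRight i + y := by
  cases x; cases y; rfl

theorem add_moveRight_inr (x : PGame.{u}) {y : PGame.{u}} (i : y.RightMoves) :
    (x + y).moveRight (toRightMovesAdd (Sum.inr i)) = x + y.moveRight i := by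
  cases x; cases y; rfl

theorem leftMoves_add_cases {x y : PGame.{u}} (k) {P : (x + y).LeftMoves → Prop}
    (hl : ∀ i, P (toLeftMovesAdd (Sum.inl i))) (hr : ∀ i, P (toLeftMovesAdd (Sum.inr i))) :
    P k := by
  rw [← Equiv.apply_symm_apply toLeftMovesAdd k]
  rcases toLeftMovesAdd.symm k with i | i
  exacts [hl i, hr i]

theorem rightMoves_add_cases {x y : PGame.{u}} (k) {P : (x + y).RightMoves → Prop}
    (hl : ∀ i, P (toRightMovesAdd (Sum.inl i))) (hr : ∀ i, P (toRightMovesAdd (Sum.inr i))) :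
    P k := by
  rw [← Equiv.apply_symm_apply toRightMovesAdd k]
  rcases toRightMovesAdd.symm k with i | i
  exacts [hl i, hr i]

end PGame

end SetTheory

namespace MisereAux

open Misere SetTheory PGame Ordinal Order

/-! ### Basic characterizations of `LeftFirst` and `RightFirst`. -/

theorem lf_def : ∀ (x : PGame),
    LeftFirst x ↔ (IsEmpty x.LeftMoves ∨ ∃ i, ¬ RightFirst (x.moveLeft i))
  | ⟨_, _, _, _⟩ => Iff.rfl

theorem rf_def : ∀ (x : PGame),
    RightFirst x ↔ (IsEmpty x.RightMoves ∨ ∃ j, ¬ LeftFirst (x.moveRight j))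
  | ⟨_, _, _, _⟩ => Iff.rfl

theorem leftFirst_of_isEmpty {x : PGame} (h : IsEmpty x.LeftMoves) : LeftFirst x :=
  (lf_def x).2 (Or.inl h)

theorem leftFirst_of_move {x : PGame} (i : x.LeftMoves)
    (h : ¬ RightFirst (x.moveLeft i)) : LeftFirst x :=
  (lf_def x).2 (Or.inr ⟨i, h⟩)

theorem rightFirst_of_isEmpty {x : PGame} (h : IsEmpty x.RightMoves) : RightFirst x :=
  (rf_def x).2 (Or.inl h)

theorem not_rightFirst {x : PGame} (hne : Nonempty x.RightMoves)
    (h : ∀ j, LeftFirst (x.moveRight j)) : ¬ RightFirst x := by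
  intro hr
  rcases (rf_def x).1 hr with he | ⟨j, hj⟩
  · exact he.false (Classical.choice hne)
  · exact hj (h j)

/-! ### The transfinite misère chain. -/

/-- `chain α` is a game with no Left options, in which Right has a forced sequence of
moves of "length" `α`: at a successor `β+1` Right's unique move is to `chain β`, and at a
limit `λ` Right's unique move is to a gadget where **Left** may jump to any `chain γ`,
`γ < λ`. -/
noncomputable def chain : Ordinal.{u} → PGame.{u} := fun α =>
  Ordinal.limitRecOn α 0
    (fun _ ih => PGame.mk PEmpty PUnit PEmpty.elim (fun _ => ih))
    (fun β _ ih => PGame.mk PEmpty PUnit PEmpty.elim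
      (fun _ => PGame.mk β.ToType PEmpty
        (fun i => ih ((Ordinal.ToType.mk (o := β)).symm i).1 ((Ordinal.ToType.mk (o := β)).symm i).2) PEmpty.elim))

theorem chain_zero : chain 0 = 0 := by
  unfold chain; exact Ordinal.limitRecOn_zero _ _ _

theorem chain_succ (β : Ordinal) :
    chain (succ β) = PGame.mk PEmpty PUnit PEmpty.elim (fun _ => chain β) :=
  by unfold chain; exact Ordinal.limitRecOn_succ _ _ _ _

/-- The limit gadget. -/
noncomputable def dgadget (β : Ordinal.{u}) : PGame.{u} :=
  PGame.mk β.ToType PEmpty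
    (fun i => chain ((Ordinal.ToType.mk (o := β)).symm i).1) PEmpty.elim

theorem chain_limit (β : Ordinal) (h : Order.IsSuccLimit β) :
    chain β = PGame.mk PEmpty PUnit PEmpty.elim (fun _ => dgadget β) :=
  by unfold chain dgadget; exact Ordinal.limitRecOn_limit _ _ _ _ h

theorem chain_leftMoves_isEmpty (α : Ordinal) : IsEmpty (chain α).LeftMoves := by
  rcases zero_or_succ_or_isSuccLimit α with h0 | ⟨β, hβ⟩ | hl
  · rw [h0, chain_zero]; exact PEmpty.instIsEmpty
  · rw [← hβ, chain_succ]; exact PEmpty.instIsEmpty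
  · rw [chain_limit α hl]; exact PEmpty.instIsEmpty

theorem chain_rightMoves_nonempty {α : Ordinal} (h : α ≠ 0) :
    Nonempty (chain α).RightMoves := by
  rcases zero_or_succ_or_isSuccLimit α with h0 | ⟨β, hβ⟩ | hl
  · exact absurd h0 h
  · rw [← hβ, chain_succ]; exact ⟨PUnit.unit⟩
  · rw [chain_limit α hl]; exact ⟨PUnit.unit⟩

/-- In the limit gadget, Left can jump to `chain γ` for any `γ < β`. -/
theorem dgadget_jump {β γ : Ordinal} (h : γ < β) :
    ∃ i : (dgadget β).LeftMoves, (dgadget β).moveLeft i = chain γ := by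
  refine ⟨Ordinal.ToType.mk (o := β) ⟨γ, h⟩, ?_⟩
  show chain ((Ordinal.ToType.mk (o := β)).symm (Ordinal.ToType.mk (o := β) ⟨γ, h⟩)).1 = chain γ
  rw [OrderIso.symm_apply_apply]

/-! ### The key lemma. -/

theorem key (J : PGame) : ∀ α : Ordinal,
    (((IsEmpty J.LeftMoves) ∨ ∃ i, (J.moveLeft i).birthday < α) → LeftFirst (J + chain α)) ∧
    (J.birthday < α → ¬ RightFirst (J + chain α)) := by
  induction J using PGame.moveRecOn with
  | _ J ihL ihR =>
  intro α
  induction α using Ordinal.induction with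
  | _ α ihα =>
  constructor
  · -- B1 : Left, moving first, wins J + chain α
    rintro (hemp | ⟨i, hi⟩)
    · exact leftFirst_of_isEmpty
        ⟨fun k => leftMoves_add_cases (P := fun _ => False) k
          (fun i => (hemp.false i).elim)
          (fun i => ((chain_leftMoves_isEmpty α).false i).elim)⟩
    · apply leftFirst_of_move (toLeftMovesAdd (Sum.inl i))
      rw [add_moveLeft_inl]
      exact (ihL i α).2 hi
  · -- B2 : Right, moving first, loses J + chain α
    intro hJ
    have hα0 : α ≠ 0 := pos_iff_ne_zero.1 ((zero_le).trans_lt hJ)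
    apply not_rightFirst
    · exact ⟨toRightMovesAdd (Sum.inr (Classical.choice (chain_rightMoves_nonempty hα0)))⟩
    · intro j
      refine rightMoves_add_cases (P := fun k => LeftFirst ((J + chain α).moveRight k)) j ?_ ?_
      · -- Right moves in J
        intro jR
        rw [add_moveRight_inl]
        apply (ihR jR α).1
        by_cases hE : IsEmpty (J.moveRight jR).LeftMoves
        · exact Or.inl hE
        · have : Nonempty (J.moveRight jR).LeftMoves := not_isEmpty_iff.1 hE
          obtain ⟨i⟩ := this
          exact Or.inr ⟨i, ((birthday_moveLeft_lt i).trans (birthday_moveRight_lt jR)).trans hJ⟩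
      · -- Right moves in the chain
        intro u
        rw [add_moveRight_inr]
        rcases zero_or_succ_or_isSuccLimit α with h0 | ⟨β, hβ⟩ | hl
        · exact absurd h0 hα0
        · subst hβ
          revert u
          rw [chain_succ]
          intro u
          show LeftFirst (J + chain β)
          have hJβ : J.birthday ≤ β := Order.lt_succ_iff.1 hJ
          apply (ihα β (Order.lt_succ β)).1
          by_cases hE : IsEmpty J.LeftMoves
          · exact Or.inl hE
          · have : Nonempty J.LeftMoves := not_isEmpty_iff.1 hE
            obtain ⟨i⟩ := this
            exact Or.inr ⟨i, lt_of_lt_of_le (birthday_moveLeft_lt i) hJβ⟩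
        · revert u
          rw [chain_limit α hl]
          intro u
          show LeftFirst (J + dgadget α)
          have hsucc : succ J.birthday < α := hl.succ_lt hJ
          obtain ⟨i, hiEq⟩ := dgadget_jump hsucc
          apply leftFirst_of_move (toLeftMovesAdd (Sum.inr i))
          rw [add_moveLeft_inr, hiEq]
          exact (ihα _ hsucc).2 (Order.lt_succ _)

/-! ### Outcome helpers. -/

theorem outcome_eq_N {x : PGame} (h1 : LeftFirst x) (h2 : RightFirst x) :
    misereOutcome x = Outcome.N := by
  have h1' : (wins x).1 := h1
  have h2' : (wins x).2 := h2
  rw [misereOutcome, if_pos h1', if_pos h2']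

theorem outcome_ne_N_of_not_rightFirst {x : PGame} (h : ¬ RightFirst x) :
    misereOutcome x ≠ Outcome.N := by
  have h' : ¬ (wins x).2 := h
  rw [misereOutcome]
  by_cases h1 : (wins x).1
  · rw [if_pos h1, if_neg h']; decide
  · rw [if_neg h1, if_neg h']; decide

end MisereAux

open Misere MisereAux SetTheory PGame in
/-- no nonzero game has an additive inverse in general misère play:
if `G` is not the zero game then `G + Ḡ` is distinguishable from `0`. -/
theorem no_nonzero_inverse (G : PGame)
    (h : Nonempty G.LeftMoves ∨ Nonempty G.RightMoves) :
    ∃ X : PGame, misereOutcome (G + -G + X) ≠ misereOutcome X := by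
  classical
  set H : PGame := G + -G with hH
  -- H has at least one Right option
  have hHr : Nonempty H.RightMoves := by
    rcases h with h1 | h2
    · obtain ⟨i⟩ := h1
      exact ⟨toRightMovesAdd (Sum.inr (toRightMovesNeg i))⟩
    · obtain ⟨j⟩ := h2
      exact ⟨toRightMovesAdd (Sum.inl j)⟩
  set ν : Ordinal := Order.succ H.birthday with hν
  set X : PGame := PGame.mk PUnit PEmpty (fun _ => chain ν) PEmpty.elim with hX
  refine ⟨X, ?_⟩
  -- the outcome of X is N
  have hXr : RightFirst X := rightFirst_of_isEmpty (by rw [hX]; exact PEmpty.instIsEmpty)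
  have hchainR : ¬ RightFirst (chain ν) := by
    rw [hν, chain_succ]
    refine not_rightFirst ⟨PUnit.unit⟩ ?_
    intro j
    exact leftFirst_of_isEmpty (chain_leftMoves_isEmpty _)
  have hXl : LeftFirst X := by
    rw [hX]
    exact leftFirst_of_move PUnit.unit hchainR
  have hoX : misereOutcome X = Outcome.N := outcome_eq_N hXl hXr
  -- Right, moving first, loses H + X
  have hHX : ¬ RightFirst (H + X) := by
    apply not_rightFirst
    · exact ⟨toRightMovesAdd (Sum.inl (Classical.choice hHr))⟩
    · intro j
      refine rightMoves_add_cases (P := fun k => LeftFirst ((H + X).moveRight k)) j ?_ ?_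
      · intro jH
        rw [add_moveRight_inl]
        refine leftFirst_of_move (toLeftMovesAdd (Sum.inr (show X.LeftMoves from PUnit.unit))) ?_
        rw [add_moveLeft_inr]
        show ¬ RightFirst (H.moveRight jH + chain ν)
        exact (key (H.moveRight jH) ν).2 ((birthday_moveRight_lt jH).trans (Order.lt_succ _))
      · intro u
        rw [hX] at u
        exact PEmpty.elim u
  rw [hoX]
  exact outcome_ne_N_of_not_rightFirst hHX
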